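/- Let $a_n \le C e^{-\gamma \sqrt{n}}$ for all $n \ge 1$, with $C,\gamma > 0$. Then there exist $D > 0$ (independent of $\delta$) and, for each $\delta > 0$ with $D^{\delta} e^{-\gamma} < 1$, a constant $S$ and $\gamma' > 0$ such that for all $n$: $\sum_{i \le \delta\sqrt{n}} \sum_{j_1+\dots+j_i \ge n,\ j_k>0} a_{j_1}\cdots a_{j_i} \le S e^{-\gamma'\sqrt{n}}$. -/

import Mathlib

open Real Finset
open scoped ENNReal NNReal

private lemma my_sqrt_add_le (x y : ℝ) (hx : 0 ≤ x) (hy : 0 ≤ y) :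
    Real.sqrt (x + y) ≤ Real.sqrt x + Real.sqrt y := by
  have h : x + y ≤ (Real.sqrt x + Real.sqrt y) ^ 2 := by
    rw [add_sq, Real.sq_sqrt hx, Real.sq_sqrt hy]
    nlinarith [Real.sqrt_nonneg x, Real.sqrt_nonneg y]
  calc Real.sqrt (x + y) ≤ Real.sqrt ((Real.sqrt x + Real.sqrt y) ^ 2) :=
        Real.sqrt_le_sqrt h
    _ = Real.sqrt x + Real.sqrt y := Real.sqrt_sq (by positivity)

private lemma my_sqrt_sum_le {ι : Type*} (s : Finset ι) (f : ι → ℝ)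
    (hf : ∀ i ∈ s, 0 ≤ f i) :
    Real.sqrt (∑ i ∈ s, f i) ≤ ∑ i ∈ s, Real.sqrt (f i) := by
  induction s using Finset.cons_induction with
  | empty => simp
  | cons a s ha ih =>
    rw [Finset.sum_cons, Finset.sum_cons]
    have h1 : 0 ≤ f a := hf a (Finset.mem_cons_self _ _)
    have h2 : 0 ≤ ∑ i ∈ s, f i :=
      Finset.sum_nonneg fun i hi => hf i (Finset.mem_cons_of_mem hi)
    calc Real.sqrt (f a + ∑ i ∈ s, f i)
        ≤ Real.sqrt (f a) + Real.sqrt (∑ i ∈ s, f i) := my_sqrt_add_le _ _ h1 h2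
      _ ≤ Real.sqrt (f a) + ∑ i ∈ s, Real.sqrt (f i) := by
          gcongr
          exact ih fun i hi => hf i (Finset.mem_cons_of_mem hi)

private lemma my_tsum_pi_pow (g : ℕ → ℝ≥0∞) :
    ∀ i : ℕ, ∑' j : Fin i → ℕ, ∏ k, g (j k) = (∑' m, g m) ^ i := by
  intro i
  induction i with
  | zero =>
    haveI : Unique (Fin 0 → ℕ) := ⟨⟨fun k => k.elim0⟩, fun f => funext fun k => k.elim0⟩
    rw [tsum_eq_single (default : Fin 0 → ℕ) (fun b hb => (hb (funext fun k => k.elim0)).elim)]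
    simp
  | succ i ih =>
    rw [← Equiv.tsum_eq (Fin.consEquiv (fun _ : Fin (i + 1) => ℕ))
      (fun j : Fin (i + 1) → ℕ => ∏ k, g (j k))]
    have hterm : ∀ p : ℕ × (Fin i → ℕ),
        (∏ k : Fin (i + 1), g ((Fin.consEquiv (fun _ : Fin (i + 1) => ℕ)) p k))
          = g p.1 * ∏ k : Fin i, g (p.2 k) := by
      intro p
      simp only [Fin.consEquiv_apply]
      rw [Fin.prod_univ_succ]
      simp [Fin.cons_zero, Fin.cons_succ]
    calc (∑' p : ℕ × (Fin i → ℕ), ∏ k : Fin (i + 1),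
            g ((Fin.consEquiv (fun _ : Fin (i + 1) => ℕ)) p k))
        = ∑' p : ℕ × (Fin i → ℕ), g p.1 * ∏ k : Fin i, g (p.2 k) := by
          exact tsum_congr hterm
      _ = ∑' m : ℕ, ∑' j : Fin i → ℕ, g m * ∏ k : Fin i, g (j k) := ENNReal.tsum_prod'
      _ = ∑' m : ℕ, g m * ∑' j : Fin i → ℕ, ∏ k : Fin i, g (j k) := by
          exact tsum_congr fun m => ENNReal.tsum_mul_left
      _ = (∑' m, g m) * (∑' j : Fin i → ℕ, ∏ k : Fin i, g (j k)) := ENNReal.tsum_mul_right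
      _ = (∑' m, g m) ^ (i + 1) := by rw [ih, pow_succ, mul_comm]

/-- Key summation estimate: if `aₙ ≤ C e^{-γ√n}`, there is `D > 0` (independent of `δ`)
such that for every `δ > 0` with `D^δ e^{-γ} < 1`, the sum
`∑_{i ≤ δ√n} ∑_{j₁+⋯+jᵢ ≥ n, jₖ>0} a_{j₁}⋯a_{jᵢ}` is `≤ S e^{-γ'√n}` for some
`S` and `γ' > 0`. -/
theorem stmt5 (γ C : ℝ) (hγ : 0 < γ) (hC : 0 < C) (a : ℕ → ℝ) (ha : ∀ n, 0 ≤ a n)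
    (hbound : ∀ n, 1 ≤ n → a n ≤ C * Real.exp (-γ * Real.sqrt n)) :
    ∃ D > 0, ∀ δ > 0, D ^ δ * Real.exp (-γ) < 1 →
      ∃ (S : ℝ) (γ' : ℝ), 0 < γ' ∧ ∀ n : ℕ, 1 ≤ n →
        ∑ i ∈ Finset.Icc 1 ⌊δ * Real.sqrt n⌋₊,
            ∑' j : {j : Fin i → ℕ // (∀ k, 0 < j k) ∧ n ≤ ∑ k, j k},
              ENNReal.ofReal (∏ k : Fin i, a (j.1 k))
          ≤ ENNReal.ofReal (S * Real.exp (-γ' * Real.sqrt n)) := by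
  set c : ℝ := γ / 2 with hc_def
  have hc : 0 < c := by positivity
  -- summability of exp (-c √m)
  have hsumm : Summable (fun m : ℕ => Real.exp (-c * Real.sqrt m)) := by
    have h2 : Summable (fun n : ℕ => 1 / (n : ℝ) ^ 2) :=
      summable_one_div_nat_pow.mpr one_lt_two
    have hbase0 : Summable (fun m : ℕ => (1 / ((m : ℝ) + 1) ^ 2)) := by
      have := (summable_nat_add_iff 1).mpr h2
      refine this.congr fun n => by push_cast; ring
    have hbase := hbase0.mul_left (96 / c ^ 4 + 1)
    refine hbase.of_nonneg_of_le (fun m => (Real.exp_pos _).le) fun m => ?_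
    rcases Nat.eq_zero_or_pos m with hm | hm
    · subst hm
      simp only [Nat.cast_zero, Real.sqrt_zero, mul_zero, Real.exp_zero, zero_add,
        one_pow, div_one]
      have h96 : (0:ℝ) < 96 / c ^ 4 := by positivity
      nlinarith
    · have hm1 : (1 : ℝ) ≤ (m : ℝ) := by exact_mod_cast hm
      have hx : 0 ≤ c * Real.sqrt m := by positivity
      have h4 := Real.pow_div_factorial_le_exp (hx := hx) (n := 4)
      have hsq : Real.sqrt (m : ℝ) ^ 4 = (m : ℝ) ^ 2 := by
        rw [show (4:ℕ) = 2*2 from rfl, pow_mul, Real.sq_sqrt (by positivity : (0:ℝ) ≤ (m:ℝ))]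
      have h5 : c ^ 4 * (m : ℝ) ^ 2 / 24 ≤ Real.exp (c * Real.sqrt m) := by
        rw [show c ^ 4 * (m:ℝ) ^ 2 / 24 = (c * Real.sqrt m) ^ 4 / (Nat.factorial 4 : ℝ) from by
          rw [mul_pow, hsq]; norm_num [Nat.factorial]]
        exact h4
      have hexppos : 0 < Real.exp (c * Real.sqrt m) := Real.exp_pos _
      have hden : (0:ℝ) < 24 / (c ^ 4 * (m:ℝ) ^ 2) := by positivity
      have h6 : Real.exp (-c * Real.sqrt m) ≤ 24 / (c ^ 4 * (m : ℝ) ^ 2) := by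
        rw [neg_mul, Real.exp_neg, inv_le_comm₀ hexppos hden, inv_div]
        exact h5
      have hc4 : (0:ℝ) < c ^ 4 := by positivity
      have h96c : (96 / c ^ 4) * c ^ 4 = 96 := by field_simp
      have h7 : 24 / (c ^ 4 * (m : ℝ) ^ 2) ≤ (96 / c ^ 4 + 1) * (1 / ((m : ℝ) + 1) ^ 2) := by
        rw [show (96 / c ^ 4 + 1) * (1 / ((m:ℝ) + 1) ^ 2)
            = (96 / c ^ 4 + 1) / (((m:ℝ) + 1) ^ 2) from by ring,
          div_le_div_iff₀ (by positivity) (by positivity)]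
        nlinarith [h96c, hm1, hc4, sq_nonneg ((m:ℝ) - 1), sq_nonneg ((m:ℝ) + 1),
          mul_pos hc4 (by positivity : (0:ℝ) < (m:ℝ) ^ 2)]
      exact h6.trans h7
  set Mr : ℝ := ∑' m : ℕ, Real.exp (-c * Real.sqrt m) with hMr_def
  have hMr0 : 0 ≤ Mr := tsum_nonneg fun m => (Real.exp_pos _).le
  set k : ℝ := max (C * Mr) 1 with hk_def
  have hk1 : (1 : ℝ) ≤ k := le_max_right _ _
  have hkpos : (0 : ℝ) < k := lt_of_lt_of_le one_pos hk1
  refine ⟨k ^ 2, by positivity, ?_⟩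
  intro δ hδ hcond
  -- extract δ * log k < c from the hypothesis
  have hlogk : 0 ≤ Real.log k := Real.log_nonneg hk1
  have hlog : δ * Real.log k < c := by
    by_contra h
    push_neg at h
    have hpow : (k ^ 2 : ℝ) ^ δ = Real.exp (δ * (2 * Real.log k)) := by
      rw [← Real.rpow_natCast k 2, ← Real.rpow_mul hkpos.le,
        Real.rpow_def_of_pos hkpos]
      ring_nf
    have : (k ^ 2 : ℝ) ^ δ * Real.exp (-γ) = Real.exp (δ * (2 * Real.log k) - γ) := by
      rw [hpow, ← Real.exp_add]; ring_nf
    rw [this] at hcond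
    have : δ * (2 * Real.log k) - γ < 0 := by
      by_contra h2; push_neg at h2
      exact absurd hcond (not_lt.mpr (Real.one_le_exp h2))
    have : δ * Real.log k < γ / 2 := by linarith
    exact absurd this (not_lt.mpr (by rw [hc_def] at h; linarith))
  set β : ℝ := c - δ * Real.log k with hβ_def
  have hβ : 0 < β := by simp only [hβ_def]; linarith
  refine ⟨2 * δ / β, β / 2, by positivity, ?_⟩
  intro n hn
  set N : ℕ := ⌊δ * Real.sqrt n⌋₊ with hN_def
  have hsqn : 0 ≤ Real.sqrt n := Real.sqrt_nonneg _
  have hNle : (N : ℝ) ≤ δ * Real.sqrt n := Nat.floor_le (by positivity)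
  -- per-i bound
  have hMsum : (∑' m : ℕ, ENNReal.ofReal (C * Real.exp (-c * Real.sqrt m)))
      = ENNReal.ofReal (C * Mr) := by
    rw [← ENNReal.ofReal_tsum_of_nonneg (fun m => by positivity) (hsumm.mul_left C)]
    congr 1
    rw [hMr_def, tsum_mul_left]
  have inner_bound : ∀ i : ℕ,
      (∑' j : {j : Fin i → ℕ // (∀ k, 0 < j k) ∧ n ≤ ∑ k, j k},
        ENNReal.ofReal (∏ k : Fin i, a (j.1 k)))
      ≤ ENNReal.ofReal (Real.exp (-c * Real.sqrt n)) * (ENNReal.ofReal k) ^ i := by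
    intro i
    set F : (Fin i → ℕ) → ℝ≥0∞ := fun j =>
      ENNReal.ofReal (Real.exp (-c * Real.sqrt n))
        * ∏ kk : Fin i, ENNReal.ofReal (C * Real.exp (-c * Real.sqrt (j kk))) with hF_def
    have key : ∀ j : Fin i → ℕ, (∀ kk, 0 < j kk) → n ≤ ∑ kk, j kk →
        ENNReal.ofReal (∏ kk : Fin i, a (j kk)) ≤ F j := by
      intro j hj1 hj2
      have step1 : ∏ kk : Fin i, a (j kk)
          ≤ ∏ kk : Fin i, (C * Real.exp (-c * Real.sqrt (j kk))
              * Real.exp (-c * Real.sqrt (j kk))) := by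
        apply Finset.prod_le_prod (fun kk _ => ha _)
        intro kk _
        have := hbound (j kk) (hj1 kk)
        calc a (j kk) ≤ C * Real.exp (-γ * Real.sqrt (j kk)) := this
          _ = C * Real.exp (-c * Real.sqrt (j kk)) * Real.exp (-c * Real.sqrt (j kk)) := by
              rw [mul_assoc, ← Real.exp_add]
              congr 2
              rw [hc_def]; ring
      have step2 : (∏ kk : Fin i, (C * Real.exp (-c * Real.sqrt (j kk))
              * Real.exp (-c * Real.sqrt (j kk))))
          = (∏ kk : Fin i, (C * Real.exp (-c * Real.sqrt (j kk))))
            * Real.exp (-c * ∑ kk : Fin i, Real.sqrt (j kk)) := by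
        rw [Finset.prod_mul_distrib, ← Real.exp_sum]
        congr 2
        rw [Finset.mul_sum]
      have step3 : Real.sqrt n ≤ ∑ kk : Fin i, Real.sqrt (j kk) := by
        calc Real.sqrt n ≤ Real.sqrt (∑ kk : Fin i, ((j kk : ℝ))) := by
              apply Real.sqrt_le_sqrt
              have : ((n : ℝ)) ≤ ((∑ kk, j kk : ℕ) : ℝ) := by exact_mod_cast hj2
              rwa [Nat.cast_sum] at this
          _ ≤ ∑ kk : Fin i, Real.sqrt ((j kk : ℝ)) :=
              my_sqrt_sum_le _ _ (fun kk _ => by positivity)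
      have step4 : Real.exp (-c * ∑ kk : Fin i, Real.sqrt (j kk))
          ≤ Real.exp (-c * Real.sqrt n) := by
        apply Real.exp_le_exp.mpr
        have := mul_le_mul_of_nonneg_left step3 hc.le
        nlinarith
      have final : ∏ kk : Fin i, a (j kk)
          ≤ Real.exp (-c * Real.sqrt n)
            * ∏ kk : Fin i, (C * Real.exp (-c * Real.sqrt (j kk))) := by
        have hprodpos : 0 ≤ ∏ kk : Fin i, (C * Real.exp (-c * Real.sqrt (j kk))) :=
          Finset.prod_nonneg fun kk _ => by positivity
        calc ∏ kk : Fin i, a (j kk)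
            ≤ (∏ kk : Fin i, (C * Real.exp (-c * Real.sqrt (j kk))))
              * Real.exp (-c * ∑ kk : Fin i, Real.sqrt (j kk)) := by
              rw [← step2]; exact step1
          _ ≤ (∏ kk : Fin i, (C * Real.exp (-c * Real.sqrt (j kk))))
              * Real.exp (-c * Real.sqrt n) := by
              exact mul_le_mul_of_nonneg_left step4 hprodpos
          _ = _ := mul_comm _ _
      calc ENNReal.ofReal (∏ kk : Fin i, a (j kk))
          ≤ ENNReal.ofReal (Real.exp (-c * Real.sqrt n)
              * ∏ kk : Fin i, (C * Real.exp (-c * Real.sqrt (j kk)))) :=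
            ENNReal.ofReal_le_ofReal final
        _ = F j := by
            rw [hF_def, ENNReal.ofReal_mul (Real.exp_pos _).le,
              ENNReal.ofReal_prod_of_nonneg (fun kk _ => by positivity)]
    calc (∑' j : {j : Fin i → ℕ // (∀ kk, 0 < j kk) ∧ n ≤ ∑ kk, j kk},
            ENNReal.ofReal (∏ kk : Fin i, a (j.1 kk)))
        ≤ ∑' j : {j : Fin i → ℕ // (∀ kk, 0 < j kk) ∧ n ≤ ∑ kk, j kk}, F j.1 :=
          ENNReal.tsum_le_tsum fun j => key j.1 j.2.1 j.2.2
      _ ≤ ∑' j : Fin i → ℕ, F j :=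
          ENNReal.tsum_comp_le_tsum_of_injective Subtype.val_injective F
      _ = ENNReal.ofReal (Real.exp (-c * Real.sqrt n))
            * ∑' j : Fin i → ℕ, ∏ kk : Fin i,
                ENNReal.ofReal (C * Real.exp (-c * Real.sqrt (j kk))) := by
          rw [hF_def]; exact ENNReal.tsum_mul_left
      _ = ENNReal.ofReal (Real.exp (-c * Real.sqrt n))
            * (∑' m : ℕ, ENNReal.ofReal (C * Real.exp (-c * Real.sqrt m))) ^ i := by
          exact congrArg (ENNReal.ofReal (Real.exp (-c * Real.sqrt n)) * ·)
            (my_tsum_pi_pow (fun m => ENNReal.ofReal (C * Real.exp (-c * Real.sqrt m))) i)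
      _ ≤ ENNReal.ofReal (Real.exp (-c * Real.sqrt n)) * (ENNReal.ofReal k) ^ i := by
          gcongr
          rw [hMsum]
          exact ENNReal.ofReal_le_ofReal (le_max_left _ _)
  -- sum over i
  have hkof1 : (1 : ℝ≥0∞) ≤ ENNReal.ofReal k := by
    rw [← ENNReal.ofReal_one]
    exact ENNReal.ofReal_le_ofReal hk1
  calc (∑ i ∈ Finset.Icc 1 N,
          ∑' j : {j : Fin i → ℕ // (∀ kk, 0 < j kk) ∧ n ≤ ∑ kk, j kk},
            ENNReal.ofReal (∏ kk : Fin i, a (j.1 kk)))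
      ≤ ∑ i ∈ Finset.Icc 1 N,
          ENNReal.ofReal (Real.exp (-c * Real.sqrt n)) * (ENNReal.ofReal k) ^ i :=
        Finset.sum_le_sum fun i _ => inner_bound i
    _ ≤ ∑ i ∈ Finset.Icc 1 N,
          ENNReal.ofReal (Real.exp (-c * Real.sqrt n)) * (ENNReal.ofReal k) ^ N := by
        apply Finset.sum_le_sum
        intro i hi
        gcongr
        · exact (Finset.mem_Icc.mp hi).2
    _ = (N : ℝ≥0∞) * (ENNReal.ofReal (Real.exp (-c * Real.sqrt n))
          * (ENNReal.ofReal k) ^ N) := by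
        rw [Finset.sum_const, Nat.card_Icc]
        simp [nsmul_eq_mul]
    _ = ENNReal.ofReal ((N : ℝ) * (Real.exp (-c * Real.sqrt n) * k ^ N)) := by
        rw [ENNReal.ofReal_mul (by positivity), ENNReal.ofReal_mul (Real.exp_pos _).le,
          ENNReal.ofReal_natCast, ENNReal.ofReal_pow hkpos.le]
    _ ≤ ENNReal.ofReal (2 * δ / β * Real.exp (-(β / 2) * Real.sqrt n)) := by
        apply ENNReal.ofReal_le_ofReal
        have hkN : (k : ℝ) ^ N = Real.exp ((N : ℝ) * Real.log k) := by
          rw [Real.exp_nat_mul, Real.exp_log hkpos]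
        have hkN2 : (k : ℝ) ^ N ≤ Real.exp (δ * Real.sqrt n * Real.log k) := by
          rw [hkN]
          apply Real.exp_le_exp.mpr
          exact mul_le_mul_of_nonneg_right hNle hlogk
        have hN2 : (N : ℝ) ≤ 2 * δ / β * Real.exp (β / 2 * Real.sqrt n) := by
          calc (N : ℝ) ≤ δ * Real.sqrt n := hNle
            _ = 2 * δ / β * (β / 2 * Real.sqrt n) := by field_simp
            _ ≤ 2 * δ / β * Real.exp (β / 2 * Real.sqrt n) := by
                apply mul_le_mul_of_nonneg_left _ (by positivity)
                calc β / 2 * Real.sqrt n ≤ β / 2 * Real.sqrt n + 1 := by linarith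
                  _ ≤ Real.exp (β / 2 * Real.sqrt n) := by
                      have := Real.add_one_le_exp (β / 2 * Real.sqrt n)
                      linarith
        calc (N : ℝ) * (Real.exp (-c * Real.sqrt n) * k ^ N)
            ≤ (2 * δ / β * Real.exp (β / 2 * Real.sqrt n))
              * (Real.exp (-c * Real.sqrt n) * Real.exp (δ * Real.sqrt n * Real.log k)) := by
              apply mul_le_mul hN2 _ (by positivity) (by positivity)
              exact mul_le_mul_of_nonneg_left hkN2 (Real.exp_pos _).le
          _ = 2 * δ / β * Real.exp (β / 2 * Real.sqrt n - c * Real.sqrt n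
                + δ * Real.sqrt n * Real.log k) := by
              rw [← Real.exp_add, mul_assoc, ← Real.exp_add]
              congr 1
              exact congrArg Real.exp (by ring)
          _ = 2 * δ / β * Real.exp (-(β / 2) * Real.sqrt n) := by
              congr 1
              congr 1
              rw [hβ_def]; ring
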